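/- Degree computation from the Poincaré formula: if classes in homology satisfy (g−d)! [W̃_d] = [Θ]^{g−d} for all 0 ≤ d ≤ g, and intersection degrees satisfy deg([Θ]^g) computed via the top cap product equals g! · deg[W̃_0] = g!, then deg([W̃_d] · [W̃_{g−d}]) = binomial(g, d). Concretely, in the model ring: the intersection product of Σ_{|I|=d} ∧_I c ⊗ ∧_I v with Σ_{|J|=g−d} ∧_J c ⊗ ∧_J v (defined via Poincaré duality and cap product) has degree binomial(g, d) against the fundamental class. -/

import Mathlib

open ExteriorAlgebra TensorProduct

/-- The wedge `∧_{k ∈ I} c k` (indices in increasing order) in the exterior algebra. -/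
noncomputable def wedgeSet {g : ℕ} {L : Type*} [AddCommGroup L] [Module ℤ L]
    (c : Fin g → L) (I : Finset (Fin g)) : ExteriorAlgebra ℤ L :=
  ((I.sort (· ≤ ·)).map fun k => ExteriorAlgebra.ι ℤ (c k)).prod

/-- The interior product, extended to an algebra homomorphism
`∧(L^*) → End(∧L)`, via the universal property of the exterior algebra. -/
noncomputable def interiorProd (L : Type*) [AddCommGroup L] [Module ℤ L] :
    ExteriorAlgebra ℤ (Module.Dual ℤ L) →ₐ[ℤ] Module.End ℤ (ExteriorAlgebra ℤ L) :=
  ExteriorAlgebra.lift ℤ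
    ⟨CliffordAlgebra.contractLeft (Q := (0 : QuadraticForm ℤ L)),
      fun d => LinearMap.ext fun x => CliffordAlgebra.contractLeft_contractLeft d x⟩

section Aux

variable {g : ℕ} {L : Type*} [AddCommGroup L] [Module ℤ L]

/-- Wedge of a list of basis vectors. -/
noncomputable def wedgeList (c : Fin g → L) (t : List (Fin g)) : ExteriorAlgebra ℤ L :=
  (t.map fun k => ExteriorAlgebra.ι ℤ (c k)).prod

lemma wedgeSet_eq_wedgeList (c : Fin g → L) (I : Finset (Fin g)) :
    wedgeSet c I = wedgeList c (I.sort (· ≤ ·)) := rfl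

@[simp] lemma wedgeList_nil (c : Fin g → L) : wedgeList c [] = 1 := rfl

lemma wedgeList_cons (c : Fin g → L) (h : Fin g) (t : List (Fin g)) :
    wedgeList c (h :: t) = ExteriorAlgebra.ι ℤ (c h) * wedgeList c t := by
  simp [wedgeList]

lemma contract_wedgeList (c : Module.Basis (Fin g) ℤ L) (j : Fin g) (t : List (Fin g))
    (ht : t.Nodup) :
    CliffordAlgebra.contractLeft (Q := (0 : QuadraticForm ℤ L)) (c.coord j) (wedgeList c t)
      = if j ∈ t then ((-1 : ℤ) ^ (t.idxOf j)) • wedgeList c (t.erase j) else 0 := by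
  induction t with
  | nil => simp [CliffordAlgebra.contractLeft_one]
  | cons h t' ih =>
    have ht' : t'.Nodup := ht.of_cons
    rw [wedgeList_cons, CliffordAlgebra.contractLeft_ι_mul, ih ht']
    have hco : c.coord j (c h) = if h = j then 1 else 0 := by
      simp [Module.Basis.coord_apply, Finsupp.single_apply]
    rcases eq_or_ne j h with rfl | hne
    · have hj : j ∉ t' := (List.nodup_cons.mp ht).1
      simp [hco, hj]
      exact one_smul ℤ _
    · have : c.coord j (c h) = 0 := by simp [hco, hne.symm]
      rw [this]
      erw [zero_smul, zero_sub]
      by_cases hj : j ∈ t'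
      · rw [if_pos hj, if_pos (List.mem_cons_of_mem _ hj)]
        rw [List.idxOf_cons_ne _ (by exact hne.symm), List.erase_cons_tail]
        · rw [wedgeList_cons, mul_smul_comm, pow_succ, ← neg_smul]
          ring_nf
        · simp [hne.symm]
      · rw [if_neg hj, if_neg (by simp [hne, hj])]
        simp

/-- Sign of the full self-contraction of a wedge of `n` basis vectors. -/
def eps : ℕ → ℤ
  | 0 => 1
  | n + 1 => (-1) ^ n * eps n

lemma eps_mul_self (n : ℕ) : eps n * eps n = 1 := by
  induction n with
  | zero => rfl
  | succ m ih =>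
    rw [eps]
    have h : ((-1 : ℤ)) ^ (m + m) = 1 :=
      Even.neg_one_pow ⟨m, rfl⟩
    calc (-1 : ℤ) ^ m * eps m * ((-1) ^ m * eps m)
        = ((-1) ^ m * (-1) ^ m) * (eps m * eps m) := by ring
      _ = 1 := by rw [← pow_add, h, ih, one_mul]

lemma interiorProd_wedgeList (c : Module.Basis (Fin g) ℤ L) (s : List (Fin g)) :
    interiorProd L (wedgeList (fun k => c.coord k) s)
      = (s.map fun j =>
          (CliffordAlgebra.contractLeft (Q := (0 : QuadraticForm ℤ L)) (c.coord j) :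
            Module.End ℤ (ExteriorAlgebra ℤ L))).prod := by
  rw [wedgeList, map_list_prod, List.map_map]
  refine congrArg List.prod (List.map_congr_left fun j _ => ?_)
  simp [interiorProd, Function.comp, ExteriorAlgebra.lift_ι_apply]
  exact ExteriorAlgebra.lift_ι_apply _ _ _ _

lemma prod_contract_zero (c : Module.Basis (Fin g) ℤ L) :
    ∀ (s t : List (Fin g)), t.Nodup → s.length = t.length → s.toFinset ≠ t.toFinset →
    ((s.map fun j =>
        (CliffordAlgebra.contractLeft (Q := (0 : QuadraticForm ℤ L)) (c.coord j) :
          Module.End ℤ (ExteriorAlgebra ℤ L))).prod) (wedgeList c t) = 0 := by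
  intro s
  induction s using List.reverseRecOn with
  | nil =>
    intro t ht hlen hne
    rw [List.length_nil] at hlen
    exact absurd (by rw [← List.length_eq_zero_iff.mp hlen.symm]) hne
  | append_singleton s' a ih =>
    intro t ht hlen hne
    rw [List.map_append, List.prod_append, List.map_singleton, List.prod_singleton,
      Module.End.mul_apply, contract_wedgeList c a t ht]
    by_cases hat : a ∈ t
    · rw [if_pos hat, map_smul]
      have h1 : (t.erase a).Nodup := ht.erase a
      have h2 : s'.length = (t.erase a).length := by
        rw [List.length_erase_of_mem hat]
        rw [List.length_append, List.length_singleton] at hlen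
        omega
      have h3 : s'.toFinset ≠ (t.erase a).toFinset := by
        intro h
        apply hne
        have : t.toFinset = (t.erase a).toFinset ∪ {a} := by
          ext x
          simp [ht.mem_erase_iff]
          by_cases hx : x = a <;> simp [hx, hat]
        rw [this, ← h]
        ext x; simp [or_comm]
      rw [ih (t.erase a) h1 h2 h3, smul_zero]
    · rw [if_neg hat, map_zero]

lemma prod_contract_diag (c : Module.Basis (Fin g) ℤ L) :
    ∀ (s : List (Fin g)), s.Nodup →
    ((s.map fun j =>
        (CliffordAlgebra.contractLeft (Q := (0 : QuadraticForm ℤ L)) (c.coord j) :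
          Module.End ℤ (ExteriorAlgebra ℤ L))).prod) (wedgeList c s)
      = eps s.length • 1 := by
  intro s
  induction s using List.reverseRecOn with
  | nil => simp [eps]
  | append_singleton s' a ih =>
    intro hs
    have has : a ∉ s' := by
      have := List.disjoint_of_nodup_append hs
      intro hmem; exact this hmem (List.mem_singleton_self a)
    have hs' : s'.Nodup := (List.nodup_append.mp hs).1
    rw [List.map_append, List.prod_append, List.map_singleton, List.prod_singleton,
      Module.End.mul_apply, contract_wedgeList c a _ hs]
    rw [if_pos (by simp), List.idxOf_append_of_notMem has, map_smul]
    have herase : (s' ++ [a]).erase a = s' := by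
      rw [List.erase_append_right _ has, List.erase_cons_head, List.append_nil]
    rw [herase, ih hs', List.length_append, List.length_singleton]
    rw [smul_smul, eps]
    congr 1
    simp

lemma interiorProd_wedgeSet_apply (c : Module.Basis (Fin g) ℤ L) (S J : Finset (Fin g))
    (hcard : S.card = J.card) :
    interiorProd L (wedgeSet (fun k => c.coord k) S) (wedgeSet c J)
      = if S = J then eps S.card • 1 else 0 := by
  rw [wedgeSet_eq_wedgeList, wedgeSet_eq_wedgeList, interiorProd_wedgeList]
  by_cases h : S = J
  · subst h
    rw [if_pos rfl]
    erw [prod_contract_diag c _ (Finset.sort_nodup _ _), Finset.length_sort]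
  · rw [if_neg h]
    exact prod_contract_zero c _ _ (Finset.sort_nodup _ _)
      (by rw [Finset.length_sort, Finset.length_sort, hcard])
      (by rw [Finset.sort_toFinset, Finset.sort_toFinset]; exact h)

end Aux

/-- The cap product `((α⊗β) ⌢ (x⊗y)) = (α ⌟ x) ⊗ (β ⌟ y)` on `(∧L^* ⊗ ∧M^*) × (∧L ⊗ ∧M)`. -/
noncomputable def cap {L M : Type*} [AddCommGroup L] [Module ℤ L]
    [AddCommGroup M] [Module ℤ M]
    (T : ExteriorAlgebra ℤ (Module.Dual ℤ L) ⊗[ℤ] ExteriorAlgebra ℤ (Module.Dual ℤ M))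
    (z : ExteriorAlgebra ℤ L ⊗[ℤ] ExteriorAlgebra ℤ M) :
    ExteriorAlgebra ℤ L ⊗[ℤ] ExteriorAlgebra ℤ M :=
  TensorProduct.homTensorHomMap (RingHom.id ℤ) _ _ _ _
    ((Algebra.TensorProduct.map (interiorProd L) (interiorProd M)) T) z


/-- degree computation from the Poincaré formula, model version: the
intersection product of `Σ_{|I|=d} ∧_I c ⊗ ∧_I v` with `Σ_{|J|=g−d} ∧_J c ⊗ ∧_J v`,
computed by capping the Poincaré duals `∧_{k∉I} c_k^* ⊗ ∧_{k∉I} v_k^*` against the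
second class, has degree `binomial(g, d)`: in degree `(0,0) ≅ ℤ` it equals
`C(g,d) · (1 ⊗ 1)`. -/
theorem degree_Wd_dot_Wgd
    (g d : ℕ) (hd : d ≤ g)
    (L M : Type*) [AddCommGroup L] [Module ℤ L] [AddCommGroup M] [Module ℤ M]
    (c : Module.Basis (Fin g) ℤ L) (v : Module.Basis (Fin g) ℤ M) :
    cap (∑ I ∈ Finset.powersetCard d (Finset.univ : Finset (Fin g)),
          wedgeSet (fun k => c.coord k) Iᶜ ⊗ₜ[ℤ] wedgeSet (fun k => v.coord k) Iᶜ)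
        (∑ J ∈ Finset.powersetCard (g - d) (Finset.univ : Finset (Fin g)),
          wedgeSet c J ⊗ₜ[ℤ] wedgeSet v J)
      = (Nat.choose g d : ℤ) •
          ((1 : ExteriorAlgebra ℤ L) ⊗ₜ[ℤ] (1 : ExteriorAlgebra ℤ M)) := by
  classical
  simp only [cap, map_sum, LinearMap.sum_apply, TensorProduct.homTensorHomMap_apply,
    Algebra.TensorProduct.map_tmul, TensorProduct.map_tmul]
  have hstep : ∀ I ∈ Finset.powersetCard d (Finset.univ : Finset (Fin g)),
      (∑ J ∈ Finset.powersetCard (g - d) (Finset.univ : Finset (Fin g)),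
        (interiorProd L (wedgeSet (fun k => c.coord k) Iᶜ)) (wedgeSet c J) ⊗ₜ[ℤ]
          (interiorProd M (wedgeSet (fun k => v.coord k) Iᶜ)) (wedgeSet v J))
      = (1 : ExteriorAlgebra ℤ L) ⊗ₜ[ℤ] (1 : ExteriorAlgebra ℤ M) := by
    intro I hI
    have hIcard : I.card = d := (Finset.mem_powersetCard_univ.mp hI)
    have hIc : (Iᶜ).card = g - d := by
      rw [Finset.card_compl, hIcard, Fintype.card_fin]
    rw [Finset.sum_eq_single_of_mem Iᶜ (Finset.mem_powersetCard_univ.mpr hIc)]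
    · rw [interiorProd_wedgeSet_apply c Iᶜ Iᶜ rfl,
        interiorProd_wedgeSet_apply v Iᶜ Iᶜ rfl, if_pos rfl, if_pos rfl]
      rw [TensorProduct.tmul_smul, TensorProduct.smul_tmul', smul_smul, eps_mul_self, one_smul]
    · intro J hJ hne
      have hJcard : J.card = g - d := Finset.mem_powersetCard_univ.mp hJ
      rw [interiorProd_wedgeSet_apply c Iᶜ J (by rw [hIc, hJcard]),
        if_neg (fun h => hne h.symm), TensorProduct.zero_tmul]
  rw [Finset.sum_comm, Finset.sum_congr rfl hstep, Finset.sum_const, Finset.card_powersetCard,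
    Finset.card_univ, Fintype.card_fin, natCast_zsmul]
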